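/- Let (μ_n) be a sequence of probability measures and A, B, C measurable sets. With the convention that cond(μ, X, Y) = 1 when μ(Y) = 0, if n ↦ cond(μ_n, B, A) and n ↦ cond(μ_n, C, A) both converge super-polynomially to 1, then so does n ↦ cond(μ_n, C, A ∩ B). (Soundness of cautious monotonicity / axiom C4 for super-polynomial semantics.) -/

import Mathlib

open MeasureTheory Filter Set

/-- Super-polynomial convergence to 1: for every polynomial with nonnegative
coefficients and at least one nonzero coefficient, eventually `a n ≥ 1 - 1/p(n)`. -/
def SuperPoly (a : ℕ → ℝ) : Prop :=
  ∀ p : Polynomial ℝ, (∀ i, 0 ≤ p.coeff i) → p ≠ 0 →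
    ∃ N : ℕ, ∀ n ≥ N, a n ≥ 1 - 1 / p.eval (n : ℝ)

/-- Conditional probability with the convention `condProb μ X Y = 1` when `μ Y = 0`. -/
noncomputable def condProb {Ω : Type*} [MeasurableSpace Ω] (μ : Measure Ω) (X Y : Set Ω) : ℝ :=
  if μ Y = 0 then 1 else (μ (X ∩ Y)).toReal / (μ Y).toReal

private lemma eval_pos_of_nonneg (p : Polynomial ℝ) (hp : ∀ i, 0 ≤ p.coeff i)
    (hp0 : p ≠ 0) {x : ℝ} (hx : 1 ≤ x) : 0 < p.eval x := by
  have hx0 : (0:ℝ) < x := lt_of_lt_of_le one_pos hx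
  rw [Polynomial.eval_eq_sum_range]
  refine Finset.sum_pos' (fun i _ => mul_nonneg (hp i) (pow_nonneg hx0.le i)) ?_
  refine ⟨p.natDegree, Finset.self_mem_range_succ _, ?_⟩
  have h1 : p.coeff p.natDegree ≠ 0 := Polynomial.leadingCoeff_ne_zero.mpr hp0
  exact mul_pos ((hp _).lt_of_ne (Ne.symm h1)) (pow_pos hx0 _)

private lemma real_arith (P Q a ab ca cab d : ℝ) (hP : 0 < P) (hQ : Q = P + 1)
    (h1 : 1 - 1/Q ≤ ab / a) (h2 : 1 - 1/Q ≤ ca / a)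
    (ha : 0 < a) (hab : 0 < ab) (hd : 0 ≤ d) (hcab : 0 ≤ cab)
    (hsplit : ca + d = a) (hsub : ab ≤ cab + d) :
    1 - 1/P ≤ cab / ab := by
  have hQ0 : 0 < Q := by rw [hQ]; linarith
  have h1' : (1 - 1/Q) * a ≤ ab := (le_div_iff₀ ha).mp h1
  have h2' : (1 - 1/Q) * a ≤ ca := (le_div_iff₀ ha).mp h2
  have hQQ : 1/Q * Q = 1 := one_div_mul_cancel hQ0.ne'
  have h1'' : a * P ≤ ab * Q := by
    have := mul_le_mul_of_nonneg_right h1' hQ0.le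
    nlinarith [this, hQQ]
  have h2'' : a * P ≤ ca * Q := by
    have := mul_le_mul_of_nonneg_right h2' hQ0.le
    nlinarith [this, hQQ]
  have hd2 : d * Q ≤ a := by nlinarith [h2'']
  have hdP : d * P ≤ ab := by
    have hh : (d * P) * Q ≤ ab * Q := by nlinarith [mul_le_mul_of_nonneg_right hd2 hP.le]
    exact le_of_mul_le_mul_right hh hQ0
  have hcd : ab - d ≤ cab := by linarith
  have e : (1 - 1/P) * ab = (ab * P - ab) / P := by field_simp
  rw [le_div_iff₀ hab, e, div_le_iff₀ hP]
  have h3 : (ab - d) * P ≤ cab * P := mul_le_mul_of_nonneg_right hcd hP.le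
  nlinarith [h3, hdP]

theorem stmt_5 {Ω : Type*} [MeasurableSpace Ω] (μ : ℕ → Measure Ω)
    (hμ : ∀ n, IsProbabilityMeasure (μ n))
    (A B C : Set Ω) (hA : MeasurableSet A) (hB : MeasurableSet B)
    (hC : MeasurableSet C)
    (h1 : SuperPoly (fun n => condProb (μ n) B A))
    (h2 : SuperPoly (fun n => condProb (μ n) C A)) :
    SuperPoly (fun n => condProb (μ n) C (A ∩ B)) := by
  intro p hp hp0
  have hqc : ∀ i, 0 ≤ (p + 1).coeff i := by
    intro i
    simp only [Polynomial.coeff_add, Polynomial.coeff_one]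
    have := hp i
    split_ifs <;> linarith
  have hq0 : (p + 1 : Polynomial ℝ) ≠ 0 := by
    intro h
    have h0 : (p + 1 : Polynomial ℝ).coeff 0 = 0 := by rw [h]; simp
    simp only [Polynomial.coeff_add, Polynomial.coeff_one_zero] at h0
    linarith [hp 0]
  obtain ⟨N1, hN1⟩ := h1 (p + 1) hqc hq0
  obtain ⟨N2, hN2⟩ := h2 (p + 1) hqc hq0
  refine ⟨max (max N1 N2) 1, fun n hn => ?_⟩
  have hn1 : (1:ℝ) ≤ (n:ℝ) := by
    have : 1 ≤ n := le_trans (le_max_right _ _) hn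
    exact_mod_cast this
  have hP : 0 < p.eval (n:ℝ) := eval_pos_of_nonneg p hp hp0 hn1
  have hQeval : (p + 1 : Polynomial ℝ).eval (n:ℝ) = p.eval (n:ℝ) + 1 := by simp
  by_cases hAB0 : μ n (A ∩ B) = 0
  · simp only [condProb, hAB0, if_pos]
    have : 0 ≤ 1 / p.eval (n:ℝ) := by positivity
    simp only [ge_iff_le]
    linarith
  · have hA0 : μ n A ≠ 0 := fun h =>
      hAB0 (measure_mono_null inter_subset_left h)
    have hN1' := hN1 n (le_trans (le_trans (le_max_left N1 N2) (le_max_left _ 1)) hn)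
    have hN2' := hN2 n (le_trans (le_trans (le_max_right N1 N2) (le_max_left _ 1)) hn)
    simp only [condProb, hA0, if_neg, ge_iff_le, hQeval] at hN1' hN2'
    simp only [condProb, hAB0, if_neg, ge_iff_le]
    have fin : ∀ s : Set Ω, μ n s ≠ ⊤ := fun s => measure_ne_top _ s
    have ha : 0 < (μ n A).toReal := ENNReal.toReal_pos hA0 (fin A)
    have hab : 0 < (μ n (A ∩ B)).toReal := ENNReal.toReal_pos hAB0 (fin _)
    have hba : (μ n (B ∩ A)).toReal = (μ n (A ∩ B)).toReal := by rw [inter_comm]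
    rw [hba] at hN1'
    -- split of A by C
    have hsplitE : μ n (C ∩ A) + μ n (A \ C) = μ n A := by
      rw [inter_comm]; exact measure_inter_add_diff A hC
    have hsplit : (μ n (C ∩ A)).toReal + (μ n (A \ C)).toReal = (μ n A).toReal := by
      rw [← ENNReal.toReal_add (fin _) (fin _), hsplitE]
    -- sub-additivity for A ∩ B
    have hsubE : μ n (A ∩ B) ≤ μ n (C ∩ (A ∩ B)) + μ n (A \ C) := by
      have e := measure_inter_add_diff (A ∩ B) hC (μ := μ n)
      calc μ n (A ∩ B) = μ n ((A ∩ B) ∩ C) + μ n ((A ∩ B) \ C) := e.symm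
        _ ≤ μ n (C ∩ (A ∩ B)) + μ n (A \ C) := by
            rw [inter_comm (A ∩ B) C]
            exact add_le_add le_rfl (measure_mono (diff_subset_diff_left inter_subset_left))
    have hsub : (μ n (A ∩ B)).toReal ≤ (μ n (C ∩ (A ∩ B))).toReal + (μ n (A \ C)).toReal := by
      rw [← ENNReal.toReal_add (fin _) (fin _)]
      exact ENNReal.toReal_mono (ENNReal.add_ne_top.mpr ⟨fin _, fin _⟩) hsubE
    exact real_arith (p.eval (n:ℝ)) (p.eval (n:ℝ) + 1) (μ n A).toReal
      (μ n (A ∩ B)).toReal (μ n (C ∩ A)).toReal (μ n (C ∩ (A ∩ B))).toReal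
      (μ n (A \ C)).toReal hP rfl hN1' hN2' ha hab ENNReal.toReal_nonneg
      ENNReal.toReal_nonneg hsplit hsub
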